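/- Let d be a prime and let f ∈ ℂ[X] be a nonzero polynomial of degree less than d. Then the number of complex d-th roots of unity z (i.e. z^d = 1) with f(z) = 0 is at most δ(f) − 1, where δ(f) denotes the number of nonzero coefficients of f. -/

import Mathlib

open Polynomial AdjoinRoot

noncomputable section Stmt18Aux

abbrev Stmt18.Rp (p : ℕ) : Type := AdjoinRoot (cyclotomic p ℤ)

namespace Stmt18


variable (p : ℕ) [hp : Fact p.Prime]

instance : IsDomain (Rp p) :=
  AdjoinRoot.isDomain_of_prime
    (UniqueFactorizationMonoid.irreducible_iff_prime.mp (cyclotomic.irreducible hp.out.pos))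

instance : IsNoetherianRing (Rp p) :=
  inferInstanceAs (IsNoetherianRing (Polynomial ℤ ⧸ (Ideal.span {cyclotomic p ℤ})))

/-- the reduction map to `ZMod p` sending the root to `1`. -/
def psi : Rp p →+* ZMod p :=
  AdjoinRoot.lift (Int.castRingHom (ZMod p)) 1 (by
    rw [eval₂_eq_eval_map, map_cyclotomic, eval_one_cyclotomic_prime]
    exact ZMod.natCast_self p)

lemma psi_root : psi p (root (cyclotomic p ℤ)) = 1 := AdjoinRoot.lift_root _

lemma root_sub_one_dvd_p : (root (cyclotomic p ℤ) - 1) ∣ ((p : ℤ) : Rp p) := by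
  have h1 : (X - 1 : ℤ[X]) ∣ (cyclotomic p ℤ - C (p : ℤ)) := by
    have : IsRoot (cyclotomic p ℤ - C (p : ℤ)) 1 := by
      simp [IsRoot, eval_one_cyclotomic_prime]
    simpa using dvd_iff_isRoot.mpr this
  have h2 := map_dvd (AdjoinRoot.mk (cyclotomic p ℤ)) h1
  simp only [map_sub, AdjoinRoot.mk_self, zero_sub, dvd_neg, map_one] at h2
  have : (AdjoinRoot.mk (cyclotomic p ℤ)) X = root _ := rfl
  rw [this, AdjoinRoot.mk_C] at h2
  simpa using h2

lemma dvd_of_psi_eq_zero (x : Rp p) (hx : psi p x = 0) :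
    (root (cyclotomic p ℤ) - 1) ∣ x := by
  obtain ⟨P, rfl⟩ := AdjoinRoot.mk_surjective x
  rw [psi, AdjoinRoot.lift_mk, eval₂_at_one] at hx
  obtain ⟨m, hm⟩ : (p : ℤ) ∣ P.eval 1 := by
    rw [← ZMod.intCast_zmod_eq_zero_iff_dvd]; exact hx
  have h1 : (X - 1 : ℤ[X]) ∣ (P - C (P.eval 1)) := by
    have : IsRoot (P - C (P.eval 1)) 1 := by simp [IsRoot]
    simpa using dvd_iff_isRoot.mpr this
  have h2 := map_dvd (AdjoinRoot.mk (cyclotomic p ℤ)) h1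
  simp only [map_sub, map_one, AdjoinRoot.mk_C] at h2
  have hX : (AdjoinRoot.mk (cyclotomic p ℤ)) X = root _ := rfl
  rw [hX] at h2
  have h3 : (root (cyclotomic p ℤ) - 1) ∣ (algebraMap ℤ (Rp p) (P.eval 1)) := by
    rw [hm]
    push_cast
    exact Dvd.dvd.mul_right (by simpa using root_sub_one_dvd_p p) _
  have : (AdjoinRoot.mk (cyclotomic p ℤ)) P
      = ((AdjoinRoot.mk (cyclotomic p ℤ)) P - algebraMap ℤ (Rp p) (P.eval 1))
        + algebraMap ℤ (Rp p) (P.eval 1) := by ring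
  rw [this]
  exact dvd_add h2 h3

variable {ζ : ℂ} (hζ : IsPrimitiveRoot ζ p)

/-- the embedding into `ℂ` sending the root to a primitive `p`-th root of unity. -/
def phi (hζ : IsPrimitiveRoot ζ p) : Rp p →+* ℂ :=
  AdjoinRoot.lift (Int.castRingHom ℂ) ζ (by
    rw [eval₂_eq_eval_map, map_cyclotomic]
    exact hζ.isRoot_cyclotomic hp.out.pos)

lemma phi_root : phi p hζ (root (cyclotomic p ℤ)) = ζ := AdjoinRoot.lift_root _

lemma phi_injective : Function.Injective (phi p hζ) := by
  rw [injective_iff_map_eq_zero]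
  intro x hx
  obtain ⟨P, rfl⟩ := AdjoinRoot.mk_surjective x
  rw [phi, AdjoinRoot.lift_mk] at hx
  have hint : IsIntegral ℤ ζ := hζ.isIntegral hp.out.pos
  have hdvd : minpoly ℤ ζ ∣ P := minpoly.isIntegrallyClosed_dvd hint (by
    rwa [aeval_def, algebraMap_int_eq])
  rw [← cyclotomic_eq_minpoly hζ hp.out.pos] at hdvd
  exact AdjoinRoot.mk_eq_zero.mpr hdvd

lemma root_ne_one : (root (cyclotomic p ℤ)) ≠ 1 := by
  obtain ⟨ζ, hζ⟩ : ∃ ζ : ℂ, IsPrimitiveRoot ζ p :=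
    ⟨_, Complex.isPrimitiveRoot_exp p hp.out.ne_zero⟩
  intro h
  have := congrArg (phi p hζ) h
  rw [phi_root, map_one] at this
  exact hζ.ne_one hp.out.one_lt this

lemma root_sub_one_not_unit : ¬ IsUnit (root (cyclotomic p ℤ) - 1) := by
  haveI : Fact (1 < p) := ⟨hp.out.one_lt⟩
  intro h
  have := h.map (psi p)
  rw [map_sub, psi_root, map_one, sub_self] at this
  exact this.ne_zero rfl


lemma theta_single {k : Type*} [CommRing k] (e : k) (a : ℕ) :
    (X : k[X]) * derivative (C e * X ^ a) = C (e * a) * X ^ a := by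
  cases a with
  | zero => simp
  | succ n =>
    rw [derivative_C_mul, derivative_X_pow, Nat.add_sub_cancel, C_mul]
    ring

lemma theta_sum {k : Type*} [CommRing k] (s : ℕ) (a : Fin s → ℕ) (d : Fin s → k) (m : ℕ) :
    (fun g : k[X] => X * derivative g)^[m] (∑ i, C (d i) * X ^ (a i))
      = ∑ i, C (d i * (a i : k) ^ m) * X ^ (a i) := by
  induction m with
  | zero => simp
  | succ m ih =>
    rw [Function.iterate_succ_apply', ih, derivative_sum, Finset.mul_sum]
    refine Finset.sum_congr rfl fun i _ => ?_
    rw [theta_single, pow_succ, ← mul_assoc]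

lemma theta_dvd {k : Type*} [CommRing k] (n : ℕ) (g : k[X])
    (hdvd : (X - 1 : k[X]) ^ (n + 1) ∣ g) :
    (X - 1 : k[X]) ^ n ∣ X * derivative g := by
  obtain ⟨q, rfl⟩ := hdvd
  rw [derivative_mul, derivative_pow]
  simp only [derivative_sub, derivative_X, derivative_one, sub_zero, mul_one, Nat.add_sub_cancel]
  refine Dvd.dvd.mul_left (dvd_add ?_ ?_) X
  · exact (dvd_mul_left _ _).mul_right _
  · exact (pow_dvd_pow _ (Nat.le_succ n)).mul_right _

lemma theta_iter_dvd {k : Type*} [CommRing k] (m n : ℕ) (g : k[X])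
    (hdvd : (X - 1 : k[X]) ^ (m + n) ∣ g) :
    (X - 1 : k[X]) ^ n ∣ (fun g : k[X] => X * derivative g)^[m] g := by
  induction m generalizing g with
  | zero => simpa using hdvd
  | succ m ih =>
    rw [Function.iterate_succ_apply]
    refine ih _ (theta_dvd _ _ ?_)
    have : m + n + 1 = m + 1 + n := by ring
    rwa [this]

lemma eval_one_eq_zero {k : Type*} [CommRing k] (g : k[X]) (h : (X - 1 : k[X]) ∣ g) :
    g.eval 1 = 0 := by
  obtain ⟨q, rfl⟩ := h
  simp

lemma coeffs_zero_of_pow_sub_one_dvd {k : Type*} [Field k] (s : ℕ) (a : Fin s → ℕ)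
    (hainj : Function.Injective fun i => ((a i : k)))
    (d : Fin s → k) (hdvd : (X - 1 : k[X]) ^ s ∣ ∑ i, C (d i) * X ^ (a i)) :
    ∀ i, d i = 0 := by
  have hm : ∀ m : Fin s, ∑ i, d i * (a i : k) ^ (m : ℕ) = 0 := by
    intro m
    have h1 : (X - 1 : k[X]) ∣ (fun g : k[X] => X * derivative g)^[(m : ℕ)]
        (∑ i, C (d i) * X ^ (a i)) := by
      have hms : (m : ℕ) + ((s - m) - 1 + 1) = s := by omega
      refine (pow_one (X - 1 : k[X])) ▸ theta_iter_dvd (m : ℕ) 1 _ ?_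
      have : (m : ℕ) + 1 ≤ s := m.2
      exact (pow_dvd_pow _ (by omega)).trans hdvd
    rw [theta_sum] at h1
    have h2 := eval_one_eq_zero _ h1
    rw [Polynomial.eval_finset_sum] at h2
    simpa using h2
  have := Matrix.eq_zero_of_forall_pow_sum_mul_pow_eq_zero hainj hm
  exact fun i => congrFun this i

lemma dvd_of_roots {k : Type*} [CommRing k] [IsDomain k] {s : ℕ} (w : Fin s → k)
    (hw : Function.Injective w) (F : k[X]) (hF : ∀ j, F.eval (w j) = 0) :
    (∏ j, (X - C (w j))) ∣ F := by
  set G : k[X] := ∏ j, (X - C (w j)) with hGdef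
  have hG : G.Monic := monic_prod_of_monic _ _ fun j _ => monic_X_sub_C _
  rw [← Polynomial.modByMonic_eq_zero_iff_dvd hG]
  by_contra hne
  apply hne
  have hGdeg : G.natDegree = s := by
    rw [hGdef, natDegree_prod_of_monic _ _ fun j _ => monic_X_sub_C _]
    simp
  refine eq_zero_of_natDegree_lt_card_of_eval_eq_zero _ hw (fun j => ?_) ?_
  · rw [modByMonic_eq_sub_mul_div F G, eval_sub, hF j, eval_mul, hGdef, eval_prod,
      Finset.prod_eq_zero (Finset.mem_univ j) (by simp)]
    simp
  · rw [Fintype.card_fin]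
    calc natDegree (F %ₘ G) < natDegree G :=
          natDegree_lt_natDegree hne (degree_modByMonic_lt F hG)
      _ = s := hGdeg

lemma lambda_dvd (s : ℕ) (a b : Fin s → ℕ)
    (hainj : Function.Injective fun i => ((a i : ZMod p)))
    (hbd : ∀ j, b j < p) (hbinj : Function.Injective b)
    {ζ : ℂ} (hζ : IsPrimitiveRoot ζ p)
    (c : Fin s → Rp p)
    (hc : ∀ j, ∑ i, c i * (root (cyclotomic p ℤ)) ^ (b j * a i) = 0) :
    ∀ i, (root (cyclotomic p ℤ) - 1) ∣ c i := by
  have hwinj : Function.Injective fun j => (root (cyclotomic p ℤ)) ^ b j := by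
    intro j j' h
    have h2 := congrArg (phi p hζ) h
    simp only [map_pow, phi_root] at h2
    exact hbinj (hζ.pow_inj (hbd j) (hbd j') h2)
  set F : (Rp p)[X] := ∑ i, C (c i) * X ^ (a i) with hF
  have hFeval : ∀ j, F.eval ((root (cyclotomic p ℤ)) ^ b j) = 0 := by
    intro j
    rw [hF, eval_finset_sum, ← hc j]
    refine Finset.sum_congr rfl fun i _ => ?_
    rw [eval_mul, eval_C, eval_pow, eval_X, ← pow_mul]
  have hdvd := dvd_of_roots _ hwinj F hFeval
  have hmap := map_dvd (Polynomial.mapRingHom (psi p)) hdvd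
  rw [hF] at hmap
  simp only [Polynomial.coe_mapRingHom, Polynomial.map_prod, Polynomial.map_sub,
    Polynomial.map_X, Polynomial.map_pow, Polynomial.map_C, map_pow, psi_root, one_pow,
    map_one, C_1, Finset.prod_const, Finset.card_univ, Fintype.card_fin,
    Polynomial.map_sum, Polynomial.map_mul] at hmap
  have hzero := coeffs_zero_of_pow_sub_one_dvd s a hainj (fun i => psi p (c i)) hmap
  exact fun i => dvd_of_psi_eq_zero p (c i) (hzero i)

lemma key (s : ℕ) (a b : Fin s → ℕ)
    (hainj : Function.Injective fun i => ((a i : ZMod p)))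
    (hbd : ∀ j, b j < p) (hbinj : Function.Injective b)
    {ζ : ℂ} (hζ : IsPrimitiveRoot ζ p)
    (c : Fin s → Rp p)
    (hc : ∀ j, ∑ i, c i * (root (cyclotomic p ℤ)) ^ (b j * a i) = 0) :
    ∀ i, c i = 0 := by
  have hlam_ne : (root (cyclotomic p ℤ) - 1 : Rp p) ≠ 0 := sub_ne_zero.mpr (root_ne_one p)
  have hpow : ∀ k (c : Fin s → Rp p),
      (∀ j, ∑ i, c i * (root (cyclotomic p ℤ)) ^ (b j * a i) = 0) →
      ∀ i, (root (cyclotomic p ℤ) - 1) ^ k ∣ c i := by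
    intro k
    induction k with
    | zero => intro c _ i; simp
    | succ k ih =>
      intro c hc i
      have h1 := lambda_dvd p s a b hainj hbd hbinj hζ c hc
      choose c' hc' using h1
      have hc'' : ∀ j, ∑ i, c' i * (root (cyclotomic p ℤ)) ^ (b j * a i) = 0 := by
        intro j
        have h3 : (root (cyclotomic p ℤ) - 1) *
            ∑ i, c' i * (root (cyclotomic p ℤ)) ^ (b j * a i) = 0 := by
          rw [Finset.mul_sum, ← hc j]
          refine Finset.sum_congr rfl fun i _ => ?_
          rw [← mul_assoc, ← hc' i]
        exact (mul_eq_zero.mp h3).resolve_left hlam_ne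
      rw [hc' i, pow_succ']
      exact mul_dvd_mul_left _ (ih c' hc'' i)
  have hbot := Ideal.iInf_pow_eq_bot_of_isDomain
      (I := (Ideal.span {root (cyclotomic p ℤ) - 1} : Ideal (Rp p))) (by
    intro h
    exact root_sub_one_not_unit p (Ideal.span_singleton_eq_top.mp h))
  intro i
  have hmem : c i ∈ (⊥ : Ideal (Rp p)) := by
    rw [← hbot, Ideal.mem_iInf]
    intro k
    rw [Ideal.span_singleton_pow, Ideal.mem_span_singleton]
    exact hpow k c hc i
  simpa using hmem

end Stmt18

end Stmt18Aux

/-- for a prime `d` and a nonzero polynomial `f ∈ ℂ[X]` of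
degree less than `d`, the number of `d`-th roots of unity that are roots of
`f` is at most `δ(f) - 1`, where `δ(f)` is the number of nonzero coefficients
of `f`. -/
theorem stmt18 (d : ℕ) (hd : d.Prime) (f : Polynomial ℂ) (hf : f ≠ 0)
    (hdeg : f.natDegree < d) :
    {z : ℂ | z ^ d = 1 ∧ Polynomial.eval z f = 0}.ncard ≤
      f.support.card - 1 := by
  classical
  haveI hfact : Fact d.Prime := ⟨hd⟩
  haveI : NeZero d := ⟨hd.ne_zero⟩
  set Z := {z : ℂ | z ^ d = 1 ∧ Polynomial.eval z f = 0} with hZ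
  set t := f.support.card with ht
  have ht1 : 1 ≤ t := Finset.card_pos.mpr (Polynomial.support_nonempty.mpr hf)
  by_contra hcon
  push_neg at hcon
  have htle : t ≤ Z.ncard := by omega
  obtain ⟨T, hTsub, hTcard⟩ := Set.exists_subset_card_eq htle
  have hTfin : T.Finite := by
    by_contra hinf
    rw [Set.Infinite.ncard hinf] at hTcard; omega
  have hTfcard : hTfin.toFinset.card = t := by
    rw [← Set.ncard_eq_toFinset_card T hTfin]; exact hTcard
  -- enumerate the support
  let ea : Fin t ≃ {x // x ∈ f.support} := f.support.equivFin.symm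
  let a : Fin t → ℕ := fun i => (ea i : ℕ)
  have hainj : Function.Injective a := fun i j h => ea.injective (Subtype.ext h)
  have hamem : ∀ i, a i ∈ f.support := fun i => (ea i).2
  have hap : ∀ i, a i < d := fun i =>
    lt_of_le_of_lt (Polynomial.le_natDegree_of_mem_supp _ (hamem i)) hdeg
  have hacast : Function.Injective fun i => ((a i : ZMod d)) := by
    intro i j h
    apply hainj
    have h2 := congrArg ZMod.val h
    rwa [ZMod.val_natCast_of_lt (hap i), ZMod.val_natCast_of_lt (hap j)] at h2
  -- enumerate the chosen roots of unity
  let ew : Fin t ≃ {x // x ∈ hTfin.toFinset} :=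
    (finCongr hTfcard.symm).trans hTfin.toFinset.equivFin.symm
  let w : Fin t → ℂ := fun j => (ew j : ℂ)
  have hwinj : Function.Injective w := fun i j h => ew.injective (Subtype.ext h)
  have hwZ : ∀ j, w j ∈ Z := fun j => hTsub (hTfin.mem_toFinset.mp (ew j).2)
  have hw1 : ∀ j, (w j) ^ d = 1 := fun j => (hwZ j).1
  have hweval : ∀ j, Polynomial.eval (w j) f = 0 := fun j => (hwZ j).2
  -- primitive root
  obtain ⟨ζ, hζ⟩ : ∃ ζ : ℂ, IsPrimitiveRoot ζ d :=
    ⟨_, Complex.isPrimitiveRoot_exp d hd.ne_zero⟩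
  choose b hbd hbe using fun j => hζ.eq_pow_of_pow_eq_one (hw1 j)
  have hbinj : Function.Injective b := by
    intro i j h
    apply hwinj
    rw [← hbe i, ← hbe j, h]
  -- the matrices
  set MR : Matrix (Fin t) (Fin t) (Stmt18.Rp d) :=
    Matrix.of (fun i j => (AdjoinRoot.root (Polynomial.cyclotomic d ℤ)) ^ (b j * a i)) with hMR
  set M : Matrix (Fin t) (Fin t) ℂ := Matrix.of (fun i j => w j ^ (a i)) with hM
  have hMeq : M = (Stmt18.phi d hζ).mapMatrix MR := by
    ext i j
    simp only [hM, hMR, Matrix.of_apply, RingHom.mapMatrix_apply, Matrix.map_apply, map_pow,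
      Stmt18.phi_root, ← hbe j, ← pow_mul]
  have hdetR : MR.det ≠ 0 := by
    intro h0
    obtain ⟨v, hv0, hvM⟩ := Matrix.exists_vecMul_eq_zero_iff.mpr h0
    apply hv0
    funext i
    refine Stmt18.key d t a b hacast hbd hbinj hζ v (fun j => ?_) i
    have h3 := congrFun hvM j
    simpa [Matrix.vecMul, dotProduct, hMR] using h3
  have hdetC : M.det ≠ 0 := by
    rw [hMeq, ← RingHom.map_det]
    intro h0
    exact hdetR (Stmt18.phi_injective d hζ (by rw [h0, map_zero]))
  -- the coefficient vector
  let c : Fin t → ℂ := fun i => f.coeff (a i)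
  have hc0 : c ≠ 0 := by
    intro h
    have h2 := congrFun h ⟨0, ht1⟩
    exact (Polynomial.mem_support_iff.mp (hamem ⟨0, ht1⟩)) h2
  have hsum : ∀ g : ℕ → ℂ, ∑ n ∈ f.support, g n = ∑ i : Fin t, g (a i) := by
    intro g
    rw [← Finset.sum_coe_sort f.support g]
    exact (Equiv.sum_comp ea (fun x => g x)).symm
  have hvec : Matrix.vecMul c M = 0 := by
    funext j
    have he : ∑ i : Fin t, c i * (w j) ^ (a i) = Polynomial.eval (w j) f := by
      rw [Polynomial.eval_eq_sum, Polynomial.sum_def, hsum (fun n => f.coeff n * (w j) ^ n)]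
    simpa [Matrix.vecMul, dotProduct, hM, he] using hweval j
  exact hdetC (Matrix.exists_vecMul_eq_zero_iff.mp ⟨c, hc0, hvec⟩)
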